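/- In any graph G of diameter 3 where D₂(G) is connected, if there exist vertices u, v with d₂(u,v) ≥ 6, then there exists a set A of 7 vertices inducing a subgraph of G isomorphic to the complement of P₇ (the path on 7 vertices). -/

import Mathlib

open SimpleGraph

/-- The 2-distance graph of `G`: same vertex set, two vertices adjacent iff
their distance in `G` equals `2`. -/
def twoDistGraph {V : Type*} (G : SimpleGraph V) : SimpleGraph V where
  Adj u v := G.dist u v = 2
  symm := by constructor; intro u v h; rwa [SimpleGraph.dist_comm]
  loopless := by constructor; intro v h; simp [SimpleGraph.dist_self] at h

private lemma twoDist_adj_iff {V : Type*} {G : SimpleGraph V} {a b : V} :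
    (twoDistGraph G).Adj a b ↔ G.dist a b = 2 := Iff.rfl

private lemma dist_getVert_le {V : Type*} {H : SimpleGraph V} (hH : H.Connected) {u v : V}
    (w : H.Walk u v) : ∀ d i : ℕ, H.dist (w.getVert i) (w.getVert (i + d)) ≤ d := by
  intro d
  induction d with
  | zero => intro i; simp [SimpleGraph.dist_self]
  | succ n ih =>
    intro i
    by_cases hc : i + n < w.length
    · have h1 : H.dist (w.getVert (i + n)) (w.getVert (i + n + 1)) = 1 :=
        SimpleGraph.dist_eq_one_iff_adj.mpr (w.adj_getVert_succ hc)
      have h2 : H.dist (w.getVert i) (w.getVert (i + (n + 1))) ≤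
          H.dist (w.getVert i) (w.getVert (i + n)) +
          H.dist (w.getVert (i + n)) (w.getVert (i + n + 1)) := by
        have : i + (n + 1) = (i + n) + 1 := by omega
        rw [this]
        exact hH.dist_triangle
      have := ih i
      omega
    · have h1 : w.getVert (i + n) = v := w.getVert_of_length_le (by omega)
      have h2 : w.getVert (i + (n + 1)) = v := w.getVert_of_length_le (by omega)
      have h3 := ih i
      rw [h1] at h3
      rw [h2]
      exact le_trans h3 (by omega)

private lemma dist_getVert_eq {V : Type*} {H : SimpleGraph V} (hH : H.Connected) {u v : V}
    (w : H.Walk u v) (hw : w.length = H.dist u v) {i j : ℕ} (hij : i ≤ j) (hj : j ≤ w.length) :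
    H.dist (w.getVert i) (w.getVert j) = j - i := by
  have l3 : H.dist (w.getVert i) (w.getVert j) ≤ j - i := by
    have := dist_getVert_le hH w (j - i) i
    rwa [show i + (j - i) = j by omega] at this
  have l1 : H.dist u (w.getVert i) ≤ i := by
    have := dist_getVert_le hH w i 0
    rwa [Nat.zero_add, w.getVert_zero] at this
  have l2 : H.dist (w.getVert j) v ≤ w.length - j := by
    have := dist_getVert_le hH w (w.length - j) j
    rwa [show j + (w.length - j) = w.length by omega, w.getVert_length] at this
  have t1 : H.dist u v ≤ H.dist u (w.getVert i) + H.dist (w.getVert i) v := hH.dist_triangle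
  have t2 : H.dist (w.getVert i) v ≤
      H.dist (w.getVert i) (w.getVert j) + H.dist (w.getVert j) v := hH.dist_triangle
  omega

section Lemmas

variable {V : Type*} {G : SimpleGraph V}

private lemma lemWindow (h2 : (twoDistGraph G).Connected) {z A B : V}
    (hA : G.dist z A = 2) (hB : G.dist z B = 2) : (twoDistGraph G).dist A B ≤ 2 := by
  have h1 : (twoDistGraph G).dist A z = 1 :=
    SimpleGraph.dist_eq_one_iff_adj.mpr (twoDist_adj_iff.mpr (by rwa [SimpleGraph.dist_comm]))
  have h2' : (twoDistGraph G).dist z B = 1 :=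
    SimpleGraph.dist_eq_one_iff_adj.mpr (twoDist_adj_iff.mpr hB)
  have := h2.dist_triangle (u := A) (v := z) (w := B)
  omega

private lemma lemFor (hG : G.Connected) (hd3 : ∀ a b : V, G.dist a b ≤ 3) {A B : V}
    (h : 2 ≤ (twoDistGraph G).dist A B) : G.dist A B = 1 ∨ G.dist A B = 3 := by
  have hne : A ≠ B := by
    rintro rfl
    rw [SimpleGraph.dist_self] at h
    omega
  have h0 : 0 < G.dist A B := hG.pos_dist_of_ne hne
  have h2' : G.dist A B ≠ 2 := by
    intro hx
    have : (twoDistGraph G).dist A B = 1 :=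
      SimpleGraph.dist_eq_one_iff_adj.mpr (twoDist_adj_iff.mpr hx)
    omega
  have := hd3 A B
  omega

private lemma lemU (hG : G.Connected) (h2 : (twoDistGraph G).Connected)
    (hd3 : ∀ a b : V, G.dist a b ≤ 3) {A B M : V} (hAB : G.dist A B = 3)
    (hMA : 3 ≤ (twoDistGraph G).dist M A) (hMB : 3 ≤ (twoDistGraph G).dist M B) :
    G.dist A M = 3 ∧ G.dist B M = 3 := by
  obtain ⟨w3, hw3⟩ := hG.exists_walk_length_eq_dist A B
  have hlen : w3.length = 3 := by rw [hw3, hAB]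
  set p := w3.getVert 1 with hp
  set q := w3.getVert 2 with hq
  have hB3 : w3.getVert 3 = B := by rw [← hlen]; exact w3.getVert_length
  have hAp : G.dist A p = 1 := by
    have := dist_getVert_eq hG w3 hw3 (i := 0) (j := 1) (by omega) (by omega)
    rwa [w3.getVert_zero] at this
  have hAq : G.dist A q = 2 := by
    have := dist_getVert_eq hG w3 hw3 (i := 0) (j := 2) (by omega) (by omega)
    rwa [w3.getVert_zero] at this
  have hpq : G.dist p q = 1 := dist_getVert_eq hG w3 hw3 (i := 1) (j := 2) (by omega) (by omega)
  have hpB : G.dist p B = 2 := by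
    have := dist_getVert_eq hG w3 hw3 (i := 1) (j := 3) (by omega) (by omega)
    rwa [hB3] at this
  have hqB : G.dist q B = 1 := by
    have := dist_getVert_eq hG w3 hw3 (i := 2) (j := 3) (by omega) (by omega)
    rwa [hB3] at this
  have dAM13 : G.dist A M = 1 ∨ G.dist A M = 3 := by
    apply lemFor hG hd3
    have := SimpleGraph.dist_comm (G := twoDistGraph G) (u := M) (v := A)
    omega
  have dBM13 : G.dist B M = 1 ∨ G.dist B M = 3 := by
    apply lemFor hG hd3
    have := SimpleGraph.dist_comm (G := twoDistGraph G) (u := M) (v := B)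
    omega
  -- q facts
  have hqA2 : G.dist q A = 2 := by rwa [SimpleGraph.dist_comm] at hAq
  have hqM_ne2 : G.dist q M ≠ 2 := by
    intro hx
    have hw := lemWindow h2 hqA2 hx
    have := SimpleGraph.dist_comm (G := twoDistGraph G) (u := M) (v := A)
    omega
  have cq : G.dist q M = G.dist B M := by
    have hqMne : q ≠ M := by
      intro he
      rw [he] at hAq
      omega
    have hpos : 0 < G.dist q M := hG.pos_dist_of_ne hqMne
    have htri1 : G.dist q M ≤ G.dist q B + G.dist B M := hG.dist_triangle
    have htri2 : G.dist B M ≤ G.dist B q + G.dist q M := hG.dist_triangle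
    have hcomm : G.dist B q = G.dist q B := SimpleGraph.dist_comm ..
    have := hd3 q M
    omega
  -- p facts
  have hpM_ne2 : G.dist p M ≠ 2 := by
    intro hx
    have hw := lemWindow h2 hx hpB
    have := SimpleGraph.dist_comm (G := twoDistGraph G) (u := M) (v := B)
    omega
  have cp : G.dist p M = G.dist A M := by
    have hpMne : p ≠ M := by
      intro he
      rw [he] at hpB
      have : G.dist M B = G.dist B M := SimpleGraph.dist_comm (G := G) (u := M) (v := B)
      omega
    have hpos : 0 < G.dist p M := hG.pos_dist_of_ne hpMne
    have htri1 : G.dist p M ≤ G.dist p A + G.dist A M := hG.dist_triangle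
    have htri2 : G.dist A M ≤ G.dist A p + G.dist p M := hG.dist_triangle
    have hcomm : G.dist p A = G.dist A p := SimpleGraph.dist_comm ..
    have := hd3 p M
    omega
  -- coupling
  have hqp : G.dist q p = 1 := by rw [SimpleGraph.dist_comm]; exact hpq
  have hc1 : G.dist p M ≤ G.dist p q + G.dist q M := hG.dist_triangle
  have hc2 : G.dist q M ≤ G.dist q p + G.dist p M := hG.dist_triangle
  have hMB' : G.dist M B = G.dist B M := SimpleGraph.dist_comm ..
  have htriAB : G.dist A B ≤ G.dist A M + G.dist M B := hG.dist_triangle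
  rcases dAM13 with hA1 | hA3 <;> rcases dBM13 with hB1 | hB3
  · omega
  · omega
  · omega
  · exact ⟨hA3, hB3⟩

private lemma lemT (hG : G.Connected) (h2 : (twoDistGraph G).Connected)
    (hd3 : ∀ a b : V, G.dist a b ≤ 3) {A B M : V} (hAB : G.dist A B = 3)
    (hMA : 3 ≤ (twoDistGraph G).dist M A) (hMB : 3 ≤ (twoDistGraph G).dist M B)
    (h4 : 4 ≤ (twoDistGraph G).dist A B) : False := by
  obtain ⟨hAM3, hBM3⟩ := lemU hG h2 hd3 hAB hMA hMB
  obtain ⟨w3, hw3⟩ := hG.exists_walk_length_eq_dist A B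
  have hlen : w3.length = 3 := by rw [hw3, hAB]
  set q := w3.getVert 2 with hqdef
  have hB3 : w3.getVert 3 = B := by rw [← hlen]; exact w3.getVert_length
  have hAq : G.dist A q = 2 := by
    have := dist_getVert_eq hG w3 hw3 (i := 0) (j := 2) (by omega) (by omega)
    rwa [w3.getVert_zero] at this
  have hqB : G.dist q B = 1 := by
    have := dist_getVert_eq hG w3 hw3 (i := 2) (j := 3) (by omega) (by omega)
    rwa [hB3] at this
  have hqM3 : G.dist q M = 3 := by
    have htri : G.dist B M ≤ G.dist B q + G.dist q M := hG.dist_triangle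
    have hcomm : G.dist B q = G.dist q B := SimpleGraph.dist_comm ..
    have hne2 : G.dist q M ≠ 2 := by
      intro hx
      have hqA2 : G.dist q A = 2 := by rwa [SimpleGraph.dist_comm] at hAq
      have hw := lemWindow h2 hqA2 hx
      have := SimpleGraph.dist_comm (G := twoDistGraph G) (u := M) (v := A)
      omega
    have := hd3 q M
    omega
  obtain ⟨w', hw'⟩ := hG.exists_walk_length_eq_dist q M
  have hlen' : w'.length = 3 := by rw [hw', hqM3]
  set r := w'.getVert 1 with hrdef
  set s := w'.getVert 2 with hsdef
  have hM3 : w'.getVert 3 = M := by rw [← hlen']; exact w'.getVert_length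
  have hqr : G.dist q r = 1 := by
    have := dist_getVert_eq hG w' hw' (i := 0) (j := 1) (by omega) (by omega)
    rwa [w'.getVert_zero] at this
  have hqs : G.dist q s = 2 := by
    have := dist_getVert_eq hG w' hw' (i := 0) (j := 2) (by omega) (by omega)
    rwa [w'.getVert_zero] at this
  have hrs : G.dist r s = 1 := dist_getVert_eq hG w' hw' (i := 1) (j := 2) (by omega) (by omega)
  have hrM : G.dist r M = 2 := by
    have := dist_getVert_eq hG w' hw' (i := 1) (j := 3) (by omega) (by omega)
    rwa [hM3] at this
  have hsM : G.dist s M = 1 := by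
    have := dist_getVert_eq hG w' hw' (i := 2) (j := 3) (by omega) (by omega)
    rwa [hM3] at this
  -- r is adjacent to B
  have hrB : G.dist r B = 1 := by
    have htri : G.dist r B ≤ G.dist r q + G.dist q B := hG.dist_triangle
    have hcomm : G.dist r q = G.dist q r := SimpleGraph.dist_comm ..
    have hne2 : G.dist r B ≠ 2 := by
      intro hx
      have hw := lemWindow h2 hrM hx
      omega
    have hne : r ≠ B := by
      intro he
      rw [he] at hrM
      omega
    have hpos : 0 < G.dist r B := hG.pos_dist_of_ne hne
    omega
  -- s is adjacent to B
  have hsB : G.dist s B = 1 := by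
    have htri : G.dist s B ≤ G.dist s r + G.dist r B := hG.dist_triangle
    have hcomm : G.dist s r = G.dist r s := SimpleGraph.dist_comm ..
    have hne2 : G.dist s B ≠ 2 := by
      intro hx
      have h1 : (twoDistGraph G).dist A q = 1 :=
        SimpleGraph.dist_eq_one_iff_adj.mpr (twoDist_adj_iff.mpr hAq)
      have h2' : (twoDistGraph G).dist q s = 1 :=
        SimpleGraph.dist_eq_one_iff_adj.mpr (twoDist_adj_iff.mpr hqs)
      have h3 : (twoDistGraph G).dist s B = 1 :=
        SimpleGraph.dist_eq_one_iff_adj.mpr (twoDist_adj_iff.mpr hx)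
      have t1 : (twoDistGraph G).dist A B ≤
          (twoDistGraph G).dist A q + (twoDistGraph G).dist q B := h2.dist_triangle
      have t2 : (twoDistGraph G).dist q B ≤
          (twoDistGraph G).dist q s + (twoDistGraph G).dist s B := h2.dist_triangle
      omega
    have hne : s ≠ B := by
      intro he
      rw [he] at hsM
      omega
    have hpos : 0 < G.dist s B := hG.pos_dist_of_ne hne
    omega
  have htri : G.dist B M ≤ G.dist B s + G.dist s M := hG.dist_triangle
  have hcomm : G.dist B s = G.dist s B := SimpleGraph.dist_comm ..
  omega

end Lemmas

theorem stmt_16 {V : Type*} [Fintype V] (G : SimpleGraph V)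
    (hG : G.Connected) (hdiam : G.diam = 3) (h2 : (twoDistGraph G).Connected)
    (u v : V) (huv : 6 ≤ (twoDistGraph G).dist u v) :
    ∃ a : Fin 7 → V, Function.Injective a ∧
      ∀ i j : Fin 7, G.Adj (a i) (a j) ↔ 2 ≤ ((i : ℤ) - (j : ℤ)).natAbs := by
  have hd3 : ∀ a b : V, G.dist a b ≤ 3 := by
    intro a b
    have hne : G.ediam ≠ ⊤ := SimpleGraph.ediam_ne_top_of_diam_ne_zero (by rw [hdiam]; omega)
    have := SimpleGraph.dist_le_diam (G := G) hne (u := a) (v := b)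
    omega
  obtain ⟨w2, hw2⟩ := h2.exists_walk_length_eq_dist u v
  set x : ℕ → V := w2.getVert with hxdef
  have hlen6 : 6 ≤ w2.length := by rw [hw2]; exact huv
  have hd2 : ∀ i j : ℕ, i ≤ j → j ≤ 6 → (twoDistGraph G).dist (x i) (x j) = j - i := by
    intro i j hij hj
    exact dist_getVert_eq h2 w2 hw2 hij (by omega)
  have hd2c : ∀ i j : ℕ, i ≤ j → j ≤ 6 → (twoDistGraph G).dist (x j) (x i) = j - i := by
    intro i j hij hj
    rw [SimpleGraph.dist_comm]
    exact hd2 i j hij hj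
  have hfor : ∀ i j : ℕ, i ≤ j → j ≤ 6 → i + 2 ≤ j →
      G.dist (x i) (x j) = 1 ∨ G.dist (x i) (x j) = 3 := by
    intro i j hij hj h2j
    apply lemFor hG hd3
    rw [hd2 i j hij hj]; omega
  have Ntri : ∀ A B C : V, G.dist A B = 3 → G.dist A C = 1 → G.dist C B = 1 → False := by
    intro A B C h3 h1 h1'
    have := hG.dist_triangle (u := A) (v := C) (w := B)
    omega
  have comm3 : ∀ A B : V, G.dist A B = 3 → G.dist B A = 3 := by
    intro A B h
    rw [SimpleGraph.dist_comm]; exact h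
  have comm1 : ∀ A B : V, G.dist A B = 1 → G.dist B A = 1 := by
    intro A B h
    rw [SimpleGraph.dist_comm]; exact h
  have N06 : ¬ G.dist (x 0) (x 6) = 3 := by
    intro h
    exact lemT (M := x 3) hG h2 hd3 h
      (by have := hd2c 0 3 (by omega) (by omega); omega)
      (by have := hd2 3 6 (by omega) (by omega); omega)
      (by have := hd2 0 6 (by omega) (by omega); omega)
  have N02 : ¬ G.dist (x 0) (x 2) = 3 := by
    intro h
    exact N06 ((lemU (M := x 6) hG h2 hd3 h
      (by have := hd2c 0 6 (by omega) (by omega); omega)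
      (by have := hd2c 2 6 (by omega) (by omega); omega)).1)
  have N03 : ¬ G.dist (x 0) (x 3) = 3 := by
    intro h
    exact N06 ((lemU (M := x 6) hG h2 hd3 h
      (by have := hd2c 0 6 (by omega) (by omega); omega)
      (by have := hd2c 3 6 (by omega) (by omega); omega)).1)
  have N36 : ¬ G.dist (x 3) (x 6) = 3 := by
    intro h
    exact N06 (comm3 _ _ ((lemU (M := x 0) hG h2 hd3 h
      (by have := hd2 0 3 (by omega) (by omega); omega)
      (by have := hd2 0 6 (by omega) (by omega); omega)).2))
  have N46 : ¬ G.dist (x 4) (x 6) = 3 := by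
    intro h
    exact N06 (comm3 _ _ ((lemU (M := x 0) hG h2 hd3 h
      (by have := hd2 0 4 (by omega) (by omega); omega)
      (by have := hd2 0 6 (by omega) (by omega); omega)).2))
  have N13 : ¬ G.dist (x 1) (x 3) = 3 := by
    intro h
    exact N36 ((lemU (M := x 6) hG h2 hd3 h
      (by have := hd2c 1 6 (by omega) (by omega); omega)
      (by have := hd2c 3 6 (by omega) (by omega); omega)).2)
  have N35 : ¬ G.dist (x 3) (x 5) = 3 := by
    intro h
    exact N03 (comm3 _ _ ((lemU (M := x 0) hG h2 hd3 h
      (by have := hd2 0 3 (by omega) (by omega); omega)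
      (by have := hd2 0 5 (by omega) (by omega); omega)).1))
  have e02 : G.dist (x 0) (x 2) = 1 := (hfor 0 2 (by omega) (by omega) (by omega)).resolve_right N02
  have e03 : G.dist (x 0) (x 3) = 1 := (hfor 0 3 (by omega) (by omega) (by omega)).resolve_right N03
  have e06 : G.dist (x 0) (x 6) = 1 := (hfor 0 6 (by omega) (by omega) (by omega)).resolve_right N06
  have e13 : G.dist (x 1) (x 3) = 1 := (hfor 1 3 (by omega) (by omega) (by omega)).resolve_right N13
  have e35 : G.dist (x 3) (x 5) = 1 := (hfor 3 5 (by omega) (by omega) (by omega)).resolve_right N35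
  have e36 : G.dist (x 3) (x 6) = 1 := (hfor 3 6 (by omega) (by omega) (by omega)).resolve_right N36
  have e46 : G.dist (x 4) (x 6) = 1 := (hfor 4 6 (by omega) (by omega) (by omega)).resolve_right N46
  have N04 : ¬ G.dist (x 0) (x 4) = 3 := fun h => Ntri _ _ _ h e06 (comm1 _ _ e46)
  have N26 : ¬ G.dist (x 2) (x 6) = 3 := fun h => Ntri _ _ _ h (comm1 _ _ e02) e06
  have N05 : ¬ G.dist (x 0) (x 5) = 3 := fun h => Ntri _ _ _ h e03 e35
  have N16 : ¬ G.dist (x 1) (x 6) = 3 := fun h => Ntri _ _ _ h e13 e36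
  have N15 : ¬ G.dist (x 1) (x 5) = 3 := fun h => Ntri _ _ _ h e13 e35
  have e04 : G.dist (x 0) (x 4) = 1 := (hfor 0 4 (by omega) (by omega) (by omega)).resolve_right N04
  have e05 : G.dist (x 0) (x 5) = 1 := (hfor 0 5 (by omega) (by omega) (by omega)).resolve_right N05
  have e16 : G.dist (x 1) (x 6) = 1 := (hfor 1 6 (by omega) (by omega) (by omega)).resolve_right N16
  have e15 : G.dist (x 1) (x 5) = 1 := (hfor 1 5 (by omega) (by omega) (by omega)).resolve_right N15
  have e26 : G.dist (x 2) (x 6) = 1 := (hfor 2 6 (by omega) (by omega) (by omega)).resolve_right N26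
  have N14 : ¬ G.dist (x 1) (x 4) = 3 := fun h => Ntri _ _ _ h e16 (comm1 _ _ e46)
  have N25 : ¬ G.dist (x 2) (x 5) = 3 := fun h => Ntri _ _ _ h (comm1 _ _ e02) e05
  have N24 : ¬ G.dist (x 2) (x 4) = 3 := fun h => Ntri _ _ _ h (comm1 _ _ e02) e04
  have e14 : G.dist (x 1) (x 4) = 1 := (hfor 1 4 (by omega) (by omega) (by omega)).resolve_right N14
  have e25 : G.dist (x 2) (x 5) = 1 := (hfor 2 5 (by omega) (by omega) (by omega)).resolve_right N25
  have e24 : G.dist (x 2) (x 4) = 1 := (hfor 2 4 (by omega) (by omega) (by omega)).resolve_right N24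
  have eAll : ∀ i j : ℕ, i ≤ 6 → j ≤ 6 → i + 2 ≤ j → G.dist (x i) (x j) = 1 := by
    intro i j hi hj hij
    interval_cases i <;> interval_cases j <;>
      first
        | omega
        | exact e02 | exact e03 | exact e04 | exact e05 | exact e06
        | exact e13 | exact e14 | exact e15 | exact e16
        | exact e24 | exact e25 | exact e26
        | exact e35 | exact e36 | exact e46
  have hcons : ∀ i : ℕ, i ≤ 5 → G.dist (x i) (x (i + 1)) = 2 := by
    intro i hi
    have h1 : (twoDistGraph G).dist (x i) (x (i + 1)) = 1 := by
      rw [hd2 i (i + 1) (by omega) (by omega)]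
      omega
    exact twoDist_adj_iff.mp (SimpleGraph.dist_eq_one_iff_adj.mp h1)
  have hxinj : ∀ i j : ℕ, i ≤ 6 → j ≤ 6 → x i = x j → i = j := by
    intro i j hi hj hxe
    by_contra hne
    rcases Nat.lt_or_ge i j with hlt | hge
    · have hdist := hd2 i j (by omega) hj
      rw [hxe, SimpleGraph.dist_self] at hdist
      omega
    · have hlt : j < i := by omega
      have hdist := hd2 j i (by omega) hi
      rw [hxe, SimpleGraph.dist_self] at hdist
      omega
  have adjF : ∀ i j : ℕ, i ≤ 6 → j ≤ 6 → i + 2 ≤ j → G.Adj (x i) (x j) :=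
    fun i j hi hj hij => SimpleGraph.dist_eq_one_iff_adj.mp (eAll i j hi hj hij)
  have rev : ∀ i j : Fin 7, G.Adj (x (i : ℕ)) (x (j : ℕ)) →
      (i : ℕ) + 2 ≤ (j : ℕ) ∨ (j : ℕ) + 2 ≤ (i : ℕ) := by
    intro i j h
    by_contra hc
    push_neg at hc
    have h1 := SimpleGraph.dist_eq_one_iff_adj.mpr h
    rcases Nat.lt_trichotomy (i : ℕ) (j : ℕ) with hlt | heq | hgt
    · have hj' : (j : ℕ) = (i : ℕ) + 1 := by omega
      rw [hj'] at h1
      have h2' := hcons (i : ℕ) (by have := j.isLt; omega)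
      omega
    · rw [heq, SimpleGraph.dist_self] at h1
      omega
    · have h1' := SimpleGraph.dist_eq_one_iff_adj.mpr h.symm
      have hi' : (i : ℕ) = (j : ℕ) + 1 := by omega
      rw [hi'] at h1'
      have h2' := hcons (j : ℕ) (by have := i.isLt; omega)
      omega
  refine ⟨fun i => x (i : ℕ), ?_, ?_⟩
  · intro i j hij
    exact Fin.ext (hxinj (i : ℕ) (j : ℕ) (by have := i.isLt; omega) (by have := j.isLt; omega) hij)
  · intro i j
    constructor
    · intro h
      have hr := rev i j h
      omega
    · intro h
      have hr : (i : ℕ) + 2 ≤ (j : ℕ) ∨ (j : ℕ) + 2 ≤ (i : ℕ) := by omega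
      rcases hr with hh | hh
      · exact adjF (i : ℕ) (j : ℕ) (by have := i.isLt; omega) (by have := j.isLt; omega) hh
      · exact (adjF (j : ℕ) (i : ℕ) (by have := j.isLt; omega) (by have := i.isLt; omega) hh).symm
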